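/- Type ²C₂ canonical divisor coefficients: work in ℚ² with the standard orthogonal coordinates e₁, e₂ for the root system C₂ (simple coroots α₁^∨ = e₁ − e₂, α₂^∨ = e₂), so that s₁(x, y) = (y, x), s₂(x, y) = (x, −y), and ρ = (2, 1), and let φ(x, y) = (q₀·(x + y), q₀·(x − y)) for a rational number q₀. Then: (i) there is a unique μ = (μ₁, μ₂) ∈ ℚ² with φ(s₂(s₁(μ))) − μ = ρ − φ(ρ), and it satisfies (μ₁ − μ₂) − 1 = (4q₀² − 6q₀ + 2)/(2q₀² − 1) and μ₁ − 1 = (−4q₀ + 3)/(2q₀² − 1); (ii) there is a unique ν = (ν₁, ν₂) ∈ ℚ² with φ(s₁(s₂(ν))) − ν = ρ − φ(ρ), and it satisfies ν₂ − 1 = (2q₀² − 4q₀ + 2)/(2q₀² − 1) and (ν₁ + ν₂) − 1 = (−6q₀ + 4)/(2q₀² − 1). Moreover, for an integer q₀ ≥ 1, in each of (i) and (ii) both quantities are ≤ 0 if and only if q₀ = 1. -/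

import Mathlib

namespace Stmt16

/-- The simple reflection `s₁` of type `C₂` in the standard orthogonal coordinates. -/
def s₁ (v : ℚ × ℚ) : ℚ × ℚ := (v.2, v.1)

/-- The simple reflection `s₂` of type `C₂` in the standard orthogonal coordinates. -/
def s₂ (v : ℚ × ℚ) : ℚ × ℚ := (v.1, -v.2)

/-- The half-sum of positive roots `ρ = (2, 1)`. -/
def ρ : ℚ × ℚ := (2, 1)

/-- The Suzuki isogeny `φ(x, y) = (q₀·(x + y), q₀·(x − y))`. -/
def φ (q₀ : ℚ) (v : ℚ × ℚ) : ℚ × ℚ := (q₀ * (v.1 + v.2), q₀ * (v.1 - v.2))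

/-- `2q² = 1` has no rational solution. -/
lemma den_ne (q : ℚ) : 2 * q ^ 2 - 1 ≠ 0 := by
  intro h
  have h' : 2 * (q : ℝ) ^ 2 - 1 = 0 := by exact_mod_cast h
  have hx : ((2 * q : ℚ) : ℝ) ^ 2 = 2 := by push_cast; nlinarith [h']
  have h2 : Real.sqrt 2 = |((2 * q : ℚ) : ℝ)| := by
    rw [← hx, Real.sqrt_sq_eq_abs]
  have : Irrational (|((2 * q : ℚ) : ℝ)|) := h2 ▸ irrational_sqrt_two
  rw [← Rat.cast_abs] at this
  exact (Rat.not_irrational _) this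

lemma sol1 (q : ℚ) (μ : ℚ × ℚ) (h : φ q (s₂ (s₁ μ)) - μ = ρ - φ q ρ) :
    μ.1 = (2*q^2-4*q+2)/(2*q^2-1) ∧ μ.2 = (-4*q^2+2*q+1)/(2*q^2-1) := by
  have hq := den_ne q
  simp only [φ, s₁, s₂, ρ, Prod.ext_iff, Prod.fst_sub, Prod.snd_sub] at h
  obtain ⟨h1, h2⟩ := h
  constructor
  · rw [eq_div_iff hq]
    linear_combination (1-q)*h1 + q*h2
  · rw [eq_div_iff hq]
    linear_combination q*h1 + (1+q)*h2

lemma sol2 (q : ℚ) (ν : ℚ × ℚ) (h : φ q (s₁ (s₂ ν)) - ν = ρ - φ q ρ) :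
    ν.1 = (-2*q^2-2*q+2)/(2*q^2-1) ∧ ν.2 = (4*q^2-4*q+1)/(2*q^2-1) := by
  have hq := den_ne q
  simp only [φ, s₁, s₂, ρ, Prod.ext_iff, Prod.fst_sub, Prod.snd_sub] at h
  obtain ⟨h1, h2⟩ := h
  constructor
  · rw [eq_div_iff hq]
    linear_combination (1+q)*h1 + (-q)*h2
  · rw [eq_div_iff hq]
    linear_combination (-q)*h1 + (1-q)*h2

lemma ex1 (q : ℚ) :
    φ q (s₂ (s₁ ((2*q^2-4*q+2)/(2*q^2-1), (-4*q^2+2*q+1)/(2*q^2-1)))) -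
      ((2*q^2-4*q+2)/(2*q^2-1), (-4*q^2+2*q+1)/(2*q^2-1)) = ρ - φ q ρ := by
  have hq := den_ne q
  have hq' : q ^ 2 * 2 - 1 ≠ 0 := by rwa [mul_comm] at hq
  simp only [φ, s₁, s₂, ρ, Prod.ext_iff, Prod.fst_sub, Prod.snd_sub]
  constructor <;> (field_simp; ring)

lemma ex2 (q : ℚ) :
    φ q (s₁ (s₂ ((-2*q^2-2*q+2)/(2*q^2-1), (4*q^2-4*q+1)/(2*q^2-1)))) -
      ((-2*q^2-2*q+2)/(2*q^2-1), (4*q^2-4*q+1)/(2*q^2-1)) = ρ - φ q ρ := by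
  have hq := den_ne q
  have hq' : q ^ 2 * 2 - 1 ≠ 0 := by rwa [mul_comm] at hq
  simp only [φ, s₁, s₂, ρ, Prod.ext_iff, Prod.fst_sub, Prod.snd_sub]
  constructor <;> (field_simp; ring)

/-- Type `²C₂` canonical divisor coefficients for `w = s₁s₂` and `w = s₂s₁`, and their
non-positivity for integers `q₀ ≥ 1` exactly when `q₀ = 1`. -/
theorem stmt16 :
    (∀ q₀ : ℚ,
      ((∃! μ : ℚ × ℚ, φ q₀ (s₂ (s₁ μ)) - μ = ρ - φ q₀ ρ) ∧
        ∀ μ : ℚ × ℚ, φ q₀ (s₂ (s₁ μ)) - μ = ρ - φ q₀ ρ →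
          (μ.1 - μ.2) - 1 = (4 * q₀ ^ 2 - 6 * q₀ + 2) / (2 * q₀ ^ 2 - 1) ∧
          μ.1 - 1 = (-4 * q₀ + 3) / (2 * q₀ ^ 2 - 1)) ∧
      ((∃! ν : ℚ × ℚ, φ q₀ (s₁ (s₂ ν)) - ν = ρ - φ q₀ ρ) ∧
        ∀ ν : ℚ × ℚ, φ q₀ (s₁ (s₂ ν)) - ν = ρ - φ q₀ ρ →
          ν.2 - 1 = (2 * q₀ ^ 2 - 4 * q₀ + 2) / (2 * q₀ ^ 2 - 1) ∧
          (ν.1 + ν.2) - 1 = (-6 * q₀ + 4) / (2 * q₀ ^ 2 - 1))) ∧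
    (∀ q₀ : ℤ, 1 ≤ q₀ →
      (((4 * (q₀ : ℚ) ^ 2 - 6 * q₀ + 2) / (2 * (q₀ : ℚ) ^ 2 - 1) ≤ 0 ∧
        (-4 * (q₀ : ℚ) + 3) / (2 * (q₀ : ℚ) ^ 2 - 1) ≤ 0) ↔ q₀ = 1) ∧
      (((2 * (q₀ : ℚ) ^ 2 - 4 * q₀ + 2) / (2 * (q₀ : ℚ) ^ 2 - 1) ≤ 0 ∧
        (-6 * (q₀ : ℚ) + 4) / (2 * (q₀ : ℚ) ^ 2 - 1) ≤ 0) ↔ q₀ = 1)) := by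
  constructor
  · intro q
    have hq := den_ne q
    refine ⟨⟨⟨_, ex1 q, ?_⟩, ?_⟩, ⟨_, ex2 q, ?_⟩, ?_⟩
    · intro y hy
      obtain ⟨h1, h2⟩ := sol1 q y hy
      exact Prod.ext h1 h2
    · intro μ hμ
      obtain ⟨h1, h2⟩ := sol1 q μ hμ
      rw [h1, h2]
      constructor <;> (field_simp; ring)
    · intro y hy
      obtain ⟨h1, h2⟩ := sol2 q y hy
      exact Prod.ext h1 h2
    · intro ν hν
      obtain ⟨h1, h2⟩ := sol2 q ν hν
      rw [h1, h2]
      have hq' : q ^ 2 * 2 - 1 ≠ 0 := by rwa [mul_comm] at hq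
      constructor <;> (field_simp; ring)
  · intro q hq
    have hq1 : (1 : ℚ) ≤ (q : ℚ) := by exact_mod_cast hq
    have hden : (0 : ℚ) < 2 * (q : ℚ) ^ 2 - 1 := by nlinarith
    constructor
    · constructor
      · rintro ⟨ha, hb⟩
        by_contra hne
        have h2 : (2 : ℤ) ≤ q := by omega
        have h2' : (2 : ℚ) ≤ (q : ℚ) := by exact_mod_cast h2
        have hnum : (0 : ℚ) < 4 * (q : ℚ) ^ 2 - 6 * q + 2 := by nlinarith
        have := div_pos hnum hden
        linarith
      · rintro rfl; norm_num
    · constructor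
      · rintro ⟨ha, hb⟩
        by_contra hne
        have h2 : (2 : ℤ) ≤ q := by omega
        have h2' : (2 : ℚ) ≤ (q : ℚ) := by exact_mod_cast h2
        have hnum : (0 : ℚ) < 2 * (q : ℚ) ^ 2 - 4 * q + 2 := by nlinarith
        have := div_pos hnum hden
        linarith
      · rintro rfl; norm_num
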